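/- For every 1 ≤ k ≤ n and all vertices i, j ∈ Fin n, the restricted shortest-path distance satisfies the Floyd–Warshall recurrence d_k(i,j) = min( d_{k-1}(i,j), d_{k-1}(i, k-1) + d_{k-1}(k-1, j) ), where the (k)-th vertex is the one with index k−1 and addition and minimum are taken in ℝ≥0∞. -/

import Mathlib

open scoped ENNReal BigOperators

/-- The weight of a walk `v₀, v₁, …, v_m`, given as a function `Fin (m+1) → Fin n`,
with respect to the edge weights `w`: the sum `Σ_{t<m} w (v t) (v (t+1))` in `ℝ≥0∞`. -/
noncomputable def walkWeight {n : ℕ} (w : Fin n → Fin n → ℝ≥0∞) {m : ℕ}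
    (v : Fin (m + 1) → Fin n) : ℝ≥0∞ :=
  ∑ t : Fin m, w (v t.castSucc) (v t.succ)

noncomputable def dRestr (n : ℕ) (w : Fin n → Fin n → ℝ≥0∞) (k : ℕ) (i j : Fin n) : ℝ≥0∞ :=
  ⨅ (m : ℕ) (v : Fin (m + 1) → Fin n) (_ : v 0 = i) (_ : v (Fin.last m) = j)
    (_ : ∀ t : Fin (m + 1), 0 < (t : ℕ) → (t : ℕ) < m → ((v t : ℕ) < k)),
    walkWeight w v

lemma dRestr_le {n : ℕ} (w : Fin n → Fin n → ℝ≥0∞) (K : ℕ) {m : ℕ}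
    (v : Fin (m + 1) → Fin n) {i j : Fin n}
    (h0 : v 0 = i) (hl : v (Fin.last m) = j)
    (hint : ∀ t : Fin (m + 1), 0 < (t : ℕ) → (t : ℕ) < m → ((v t : ℕ) < K)) :
    dRestr n w K i j ≤ walkWeight w v :=
  iInf_le_of_le m (iInf_le_of_le v (iInf_le_of_le h0 (iInf_le_of_le hl
    (iInf_le _ hint))))

lemma walkWeight_split {n : ℕ} (w : Fin n → Fin n → ℝ≥0∞) {a b : ℕ}
    (v : Fin (a + b + 1) → Fin n) :
    walkWeight w v =
      walkWeight w (fun s : Fin (a + 1) => v ⟨s, by omega⟩) +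
      walkWeight w (fun s : Fin (b + 1) => v ⟨a + s, by omega⟩) := by
  unfold walkWeight
  rw [Fin.sum_univ_add]
  rfl

lemma dRestr_le_add {n : ℕ} (w : Fin n → Fin n → ℝ≥0∞) (K : ℕ) {m1 m2 : ℕ}
    (v1 : Fin (m1 + 1) → Fin n) (v2 : Fin (m2 + 1) → Fin n) {i x j : Fin n}
    (hx : (x : ℕ) < K)
    (h10 : v1 0 = i) (h1l : v1 (Fin.last m1) = x)
    (h1int : ∀ t : Fin (m1 + 1), 0 < (t : ℕ) → (t : ℕ) < m1 → ((v1 t : ℕ) < K))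
    (h20 : v2 0 = x) (h2l : v2 (Fin.last m2) = j)
    (h2int : ∀ t : Fin (m2 + 1), 0 < (t : ℕ) → (t : ℕ) < m2 → ((v2 t : ℕ) < K)) :
    dRestr n w K i j ≤ walkWeight w v1 + walkWeight w v2 := by
  set V : Fin (m1 + m2 + 1) → Fin n := fun t =>
    if h : (t : ℕ) ≤ m1 then v1 ⟨t, by omega⟩ else v2 ⟨(t : ℕ) - m1, by omega⟩ with hV
  have hmk1 : ∀ (s : ℕ) (h : s < m1 + m2 + 1) (h' : s ≤ m1),
      V ⟨s, h⟩ = v1 ⟨s, by omega⟩ := by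
    intro s h h'
    simp only [hV]
    rw [dif_pos h']
  have hmk2 : ∀ (s : ℕ) (h : s < m1 + m2 + 1) (h' : ¬ s ≤ m1),
      V ⟨s, h⟩ = v2 ⟨s - m1, by omega⟩ := by
    intro s h h'
    simp only [hV]
    rw [dif_neg h']
  have hV0 : V 0 = i := by
    have e : (0 : Fin (m1 + m2 + 1)) = ⟨0, by omega⟩ := rfl
    rw [e, hmk1 0 (by omega) (by omega), ← h10]
    congr 1
  have hVlast : V (Fin.last (m1 + m2)) = j := by
    have e : Fin.last (m1 + m2) = ⟨m1 + m2, by omega⟩ := rfl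
    rw [e]
    by_cases h : m1 + m2 ≤ m1
    · have hm2 : m2 = 0 := by omega
      subst hm2
      rw [hmk1 (m1 + 0) (by omega) (by omega)]
      have e2 : (⟨m1 + 0, by omega⟩ : Fin (m1 + 1)) = Fin.last m1 := rfl
      rw [e2, h1l, ← h20, ← h2l]
      congr 1
    · rw [hmk2 (m1 + m2) (by omega) h, ← h2l]
      congr 1
      ext
      simp
  have hVint : ∀ t : Fin (m1 + m2 + 1), 0 < (t : ℕ) → (t : ℕ) < m1 + m2 →
      ((V t : ℕ) < K) := by
    intro t ht0 htm
    have e : t = ⟨(t : ℕ), t.isLt⟩ := rfl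
    by_cases h : (t : ℕ) ≤ m1
    · rw [e, hmk1 (t : ℕ) t.isLt h]
      rcases eq_or_lt_of_le h with h' | h'
      · have e2 : (⟨(t : ℕ), by omega⟩ : Fin (m1 + 1)) = Fin.last m1 := by
          ext; simpa using h'
        rw [e2, h1l]; exact hx
      · exact h1int ⟨(t : ℕ), by omega⟩ ht0 h'
    · rw [e, hmk2 (t : ℕ) t.isLt h]
      refine h2int ⟨(t : ℕ) - m1, by omega⟩ ?_ ?_
      · show 0 < (t : ℕ) - m1; omega
      · show (t : ℕ) - m1 < m2; omega
  have hw : walkWeight w V = walkWeight w v1 + walkWeight w v2 := by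
    rw [walkWeight_split w V]
    congr 1
    · refine congrArg _ (funext fun s => ?_)
      rw [hmk1 (s : ℕ) (by omega) (by omega)]
    · refine congrArg _ (funext fun s => ?_)
      by_cases h : m1 + (s : ℕ) ≤ m1
      · rw [hmk1 (m1 + (s : ℕ)) (by omega) h]
        have hs0 : (s : ℕ) = 0 := by omega
        have e2 : (⟨m1 + (s : ℕ), by omega⟩ : Fin (m1 + 1)) = Fin.last m1 := by
          ext; simp only [Fin.val_last, Fin.val_mk]; omega
        have e3 : s = 0 := by ext; simpa using hs0
        rw [e2, h1l, e3, h20]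
      · rw [hmk2 (m1 + (s : ℕ)) (by omega) h]
        congr 1
        ext
        simp
  rw [← hw]
  exact dRestr_le w K V hV0 hVlast hVint

lemma dRestr_triangle {n : ℕ} (w : Fin n → Fin n → ℝ≥0∞) (K : ℕ) (i j x : Fin n)
    (hx : (x : ℕ) < K) :
    dRestr n w K i j ≤ dRestr n w K i x + dRestr n w K x j := by
  conv_rhs => rw [dRestr, dRestr]
  simp only [ENNReal.iInf_add, ENNReal.add_iInf]
  refine le_iInf fun m1 => le_iInf fun v1 => le_iInf fun h10 => le_iInf fun h1l =>
    le_iInf fun h1int => le_iInf fun m2 => le_iInf fun v2 => le_iInf fun h20 =>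
    le_iInf fun h2l => le_iInf fun h2int => ?_
  exact dRestr_le_add w K v2 v1 hx h20 h2l h2int h10 h1l h1int

lemma dRestr_mono {n : ℕ} (w : Fin n → Fin n → ℝ≥0∞) {K K' : ℕ} (h : K ≤ K') (i j : Fin n) :
    dRestr n w K' i j ≤ dRestr n w K i j := by
  refine le_iInf fun m => le_iInf fun v => le_iInf fun h0 => le_iInf fun hl =>
    le_iInf fun hint => ?_
  exact dRestr_le w K' v h0 hl fun t a b => lt_of_lt_of_le (hint t a b) h

lemma dRestr_self {n : ℕ} (w : Fin n → Fin n → ℝ≥0∞) (K : ℕ) (x : Fin n) :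
    dRestr n w K x x = 0 := by
  refine le_antisymm ?_ zero_le
  have := dRestr_le (m := 0) w K (fun _ => x) rfl rfl (fun t h1 h2 => by omega)
  simpa [walkWeight] using this

lemma walkWeight_split' {n : ℕ} (w : Fin n → Fin n → ℝ≥0∞) {m : ℕ}
    (v : Fin (m + 1) → Fin n) (a b : ℕ) (hab : a + b = m) :
    walkWeight w v =
      walkWeight w (fun s : Fin (a + 1) => v ⟨s, by omega⟩) +
      walkWeight w (fun s : Fin (b + 1) => v ⟨a + s, by omega⟩) := by
  subst hab
  exact walkWeight_split w v

lemma floyd_key {n : ℕ} (w : Fin n → Fin n → ℝ≥0∞) (k : ℕ) (c : Fin n)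
    (hc : (c : ℕ) = k - 1) (hk1 : 1 ≤ k) :
    ∀ m : ℕ, ∀ v : Fin (m + 1) → Fin n,
      (∀ t : Fin (m + 1), 0 < (t : ℕ) → (t : ℕ) < m → ((v t : ℕ) < k)) →
      min (dRestr n w (k - 1) (v 0) (v (Fin.last m)))
        (dRestr n w (k - 1) (v 0) c + dRestr n w (k - 1) c (v (Fin.last m))) ≤
        walkWeight w v := by
  intro m
  induction m using Nat.strong_induction_on with
  | _ m IH =>
    intro v hv
    by_cases h : ∀ t : Fin (m + 1), 0 < (t : ℕ) → (t : ℕ) < m → ((v t : ℕ) < k - 1)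
    · exact le_trans (min_le_left _ _) (dRestr_le w (k - 1) v rfl rfl h)
    · push_neg at h
      obtain ⟨t, ht0, htm, htk⟩ := h
      have hvtc : v t = c := by
        have := hv t ht0 htm
        ext; omega
      rw [walkWeight_split' w v (t : ℕ) (m - (t : ℕ)) (by omega)]
      set P : Fin ((t : ℕ) + 1) → Fin n := fun s => v ⟨s, by omega⟩ with hP
      set S : Fin (m - (t : ℕ) + 1) → Fin n := fun s => v ⟨(t : ℕ) + s, by omega⟩ with hS
      have hP0 : P 0 = v 0 := by
        simp only [hP]; congr 1
      have hPlast : P (Fin.last (t : ℕ)) = c := by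
        simp only [hP]; rw [← hvtc]; congr 1
      have hS0 : S 0 = c := by
        rw [← hvtc]
        show v _ = v t
        congr 1
      have hSlast : S (Fin.last (m - (t : ℕ))) = v (Fin.last m) := by
        simp only [hS]; congr 1; ext; simp [Fin.val_last]; omega
      have hPint : ∀ s : Fin ((t : ℕ) + 1), 0 < (s : ℕ) → (s : ℕ) < (t : ℕ) →
          ((P s : ℕ) < k) := by
        intro s hs0 hst
        exact hv ⟨(s : ℕ), by omega⟩ hs0 (by show (s : ℕ) < m; omega)
      have hSint : ∀ s : Fin (m - (t : ℕ) + 1), 0 < (s : ℕ) → (s : ℕ) < m - (t : ℕ) →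
          ((S s : ℕ) < k) := by
        intro s hs0 hst
        refine hv ⟨(t : ℕ) + (s : ℕ), by omega⟩ ?_ ?_
        · show 0 < (t : ℕ) + (s : ℕ); omega
        · show (t : ℕ) + (s : ℕ) < m; omega
      have h1 := IH (t : ℕ) htm P hPint
      have h2 := IH (m - (t : ℕ)) (by omega) S hSint
      rw [hP0, hPlast, dRestr_self] at h1
      rw [hS0, hSlast, dRestr_self] at h2
      simp only [add_zero, min_self] at h1
      simp only [zero_add, min_self] at h2
      exact le_trans (min_le_right _ _) (add_le_add h1 h2)

/-- The Floyd–Warshall recurrence: for `1 ≤ k ≤ n`,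
`d_k(i,j) = min (d_{k-1}(i,j)) (d_{k-1}(i,k-1) + d_{k-1}(k-1,j))`,
where the `k`-th vertex is the one with index `k-1`. -/
theorem floyd_warshall_recurrence (n : ℕ) (w : Fin n → Fin n → ℝ≥0∞)
    (k : ℕ) (hk1 : 1 ≤ k) (hkn : k ≤ n) (i j : Fin n) :
    dRestr n w k i j =
      min (dRestr n w (k - 1) i j)
        (dRestr n w (k - 1) i ⟨k - 1, by omega⟩ +
          dRestr n w (k - 1) ⟨k - 1, by omega⟩ j) := by
  set c : Fin n := ⟨k - 1, by omega⟩ with hc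
  apply le_antisymm
  · apply le_min
    · exact dRestr_mono w (by omega) i j
    · calc dRestr n w k i j ≤ dRestr n w k i c + dRestr n w k c j :=
            dRestr_triangle w k i j c (by simp [hc]; omega)
        _ ≤ _ := add_le_add (dRestr_mono w (by omega) i c) (dRestr_mono w (by omega) c j)
  · refine le_iInf fun m => le_iInf fun v => le_iInf fun h0 => le_iInf fun hl =>
      le_iInf fun hint => ?_
    have := floyd_key w k c (by simp [hc]) hk1 m v hint
    rw [h0, hl] at this
    exact this
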